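/- (Algebraic Littlewood–Richardson formula.) Let k be a field, H a Hopf algebra over k with antipode S, and B = (L_λ)_{λ ∈ P} a k-basis of H with multiplication structure constants b^ν_{λ,μ} and coproduct structure constants c^ν_{λ,μ}. Assume: (1) there are functions e : P → ℕ and T : P → P such that S(L_ρ) = (−1)^{e(ρ)}·L_{T(ρ)} for all ρ ∈ P; and (2) for each ν, μ ∈ P the set {λ ∈ P : b^ν_{λ,μ} ≠ 0} is finite. Then for all λ, μ, σ, τ ∈ P, the product of skew elements satisfies L_{μ/λ}·L_{τ/σ} = Σ_{π,ρ,λ⁻,μ⁺} (−1)^{e(ρ)}·c^τ_{π,ρ,σ}·b^λ_{λ⁻,T(ρ)}·b^{μ⁺}_{μ,π}·L_{μ⁺/λ⁻}, where the sum is over π, ρ, λ⁻, μ⁺ ∈ P and is finite: (π,ρ) ranges over the finite support of (π,ρ) ↦ c^τ_{π,ρ,σ}, λ⁻ over the finite set {λ⁻ : b^λ_{λ⁻,T(ρ)} ≠ 0} given by hypothesis (2), and μ⁺ over the finite support of the B-coordinates of L_μ·L_π. -/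

import Mathlib

open TensorProduct

variable {k : Type*} [Field k] {H : Type*} [Ring H] [HopfAlgebra k H]
variable {P : Type*}

/-- The multiplication structure constant `b^ν_{λ,μ}`: the `L_ν`-coordinate of
`L_λ · L_μ`. -/
noncomputable def bC (B : Module.Basis P k H) (ν lam μ : P) : k :=
  B.repr (B lam * B μ) ν

/-- The coproduct structure constant `c^ν_{λ,μ}`: the `(L_λ ⊗ L_μ)`-coordinate
of `Δ(L_ν)` with respect to the basis of `H ⊗ H` induced by `B`. -/
noncomputable def cC (B : Module.Basis P k H) (ν lam μ : P) : k :=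
  (B.tensorProduct B).repr (Coalgebra.comul (B ν)) (lam, μ)

/-- The skew element `L_{ν/μ} := Σ_λ c^ν_{λ,μ} • L_λ`. -/
noncomputable def skewL (B : Module.Basis P k H) (ν μ : P) : H :=
  ∑ᶠ lam, cC B ν lam μ • B lam

/-- The triple coproduct constant `c^τ_{π,ρ,σ} := Σ_κ c^τ_{κ,σ} · c^κ_{π,ρ}`
(a finite sum). -/
noncomputable def cC3 (B : Module.Basis P k H) (τ π ρ σ : P) : k :=
  ∑ᶠ κ, cC B τ κ σ * cC B κ π ρ

namespace SkewLR

open Coalgebra LinearMap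

noncomputable def sk (f : H →ₗ[k] k) : H →ₗ[k] H :=
  (TensorProduct.rid k H).toLinearMap ∘ₗ LinearMap.lTensor H f ∘ₗ Coalgebra.comul

lemma sk_apply (f : H →ₗ[k] k) (a : H) :
    sk f a = (TensorProduct.rid k H) (LinearMap.lTensor H f (Coalgebra.comul a)) := rfl

lemma sk_smul (c : k) (f : H →ₗ[k] k) (a : H) :
    sk (c • f) a = c • sk f a := by
  simp [sk_apply, LinearMap.lTensor_smul]

lemma comp_smul' (f : H →ₗ[k] k) (c : k) (g : H →ₗ[k] H) :
    f ∘ₗ (c • g) = c • (f ∘ₗ g) := by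
  ext; simp

lemma mulRight_smul' (c : k) (x : H) :
    LinearMap.mulRight k (c • x) = c • LinearMap.mulRight k x := by
  ext y; simp [mul_smul_comm]

lemma basis_expand {M : Type*} [AddCommGroup M] [Module k M]
    {ι : Type*} (b : Module.Basis ι k M) (x : M) :
    x = ∑ i ∈ (b.repr x).support, b.repr x i • b i := by
  conv_lhs => rw [← b.linearCombination_repr x]
  rw [Finsupp.linearCombination_apply, Finsupp.sum]

noncomputable def Phi (f : H →ₗ[k] k) (c d : H) : H ⊗[k] (H ⊗[k] H) →ₗ[k] H :=
  (TensorProduct.rid k H).toLinearMap ∘ₗ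
    TensorProduct.map (LinearMap.mulLeft k c) (f ∘ₗ LinearMap.mulLeft k d) ∘ₗ
    LinearMap.lTensor H
      ((LinearMap.mul' k H) ∘ₗ LinearMap.lTensor H (HopfAlgebra.antipode (R := k)))

lemma Phi_apply (f : H →ₗ[k] k) (c d x y z : H) :
    Phi f c d (x ⊗ₜ[k] (y ⊗ₜ[k] z)) =
      f (d * (y * HopfAlgebra.antipode (R := k) z)) • (c * x) := by
  simp [Phi, LinearMap.mul'_apply]

lemma counit_smul_sum {b : H} {ι : Type*} (rb : Coalgebra.Repr k b ι) :
    ∑ i ∈ rb.index, Coalgebra.counit (R := k) (rb.right i) • rb.left i = b := by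
  calc ∑ i ∈ rb.index, Coalgebra.counit (R := k) (rb.right i) • rb.left i
      = ∑ i ∈ rb.index,
          TensorProduct.rid k H (rb.left i ⊗ₜ[k] Coalgebra.counit (R := k) (rb.right i)) := by
        simp
    _ = TensorProduct.rid k H (b ⊗ₜ[k] (1 : k)) := by
        rw [← map_sum, Coalgebra.sum_tmul_counit_eq]
    _ = b := by simp

/-- The key Hopf-algebraic lemma: `(a ↼ f) · b = Σ (a·b₁) ↼ (f ∘ r_{S(b₂)})`. -/
lemma key (f : H →ₗ[k] k) (a b : H) {ι : Type*} (rb : Coalgebra.Repr k b ι) :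
    sk f a * b =
      ∑ i ∈ rb.index,
        sk (f ∘ₗ LinearMap.mulRight k (HopfAlgebra.antipode (R := k) (rb.right i)))
          (a * rb.left i) := by
  classical
  set ra := Coalgebra.Repr.arbitrary k a with hra
  set r1 : ∀ i, Coalgebra.Repr k (rb.left i) (H × H) :=
    fun i => Coalgebra.Repr.arbitrary k (rb.left i) with hr1
  set r2 : ∀ i, Coalgebra.Repr k (rb.right i) (H × H) :=
    fun i => Coalgebra.Repr.arbitrary k (rb.right i) with hr2
  have hcomul : ∀ i, Coalgebra.comul (R := k) (a * rb.left i)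
      = ∑ j ∈ ra.index, ∑ m ∈ (r1 i).index,
          (ra.left j * (r1 i).left m) ⊗ₜ[k] (ra.right j * (r1 i).right m) := by
    intro i
    rw [Bialgebra.comul_mul, ← ra.eq, ← (r1 i).eq, Finset.sum_mul_sum]
    simp [Algebra.TensorProduct.tmul_mul_tmul]
  have hsk : ∀ i,
      sk (f ∘ₗ LinearMap.mulRight k (HopfAlgebra.antipode (R := k) (rb.right i)))
        (a * rb.left i)
      = ∑ j ∈ ra.index, ∑ m ∈ (r1 i).index,
          Phi f (ra.left j) (ra.right j)
            ((r1 i).left m ⊗ₜ[k] ((r1 i).right m ⊗ₜ[k] rb.right i)) := by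
    intro i
    rw [sk_apply, hcomul i]
    simp only [map_sum, LinearMap.lTensor_tmul, LinearMap.coe_comp, Function.comp_apply,
      LinearMap.mulRight_apply, TensorProduct.rid_tmul, Phi_apply]
    refine Finset.sum_congr rfl fun j _ => Finset.sum_congr rfl fun m _ => ?_
    rw [mul_assoc]
  have hassoc := Coalgebra.sum_tmul_tmul_eq rb r1 r2
  have hPhi : ∀ j,
      ∑ i ∈ rb.index, ∑ m ∈ (r1 i).index,
        Phi f (ra.left j) (ra.right j)
          ((r1 i).left m ⊗ₜ[k] ((r1 i).right m ⊗ₜ[k] rb.right i))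
      = ∑ i ∈ rb.index, ∑ m ∈ (r2 i).index,
        Phi f (ra.left j) (ra.right j)
          (rb.left i ⊗ₜ[k] ((r2 i).left m ⊗ₜ[k] (r2 i).right m)) := by
    intro j
    have := congrArg (Phi f (ra.left j) (ra.right j)) hassoc
    simpa [map_sum] using this
  calc sk f a * b
      = ∑ j ∈ ra.index, f (ra.right j) • (ra.left j * b) := by
        rw [sk_apply, ← ra.eq]
        simp only [map_sum, LinearMap.lTensor_tmul, TensorProduct.rid_tmul]
        rw [Finset.sum_mul]
        simp [smul_mul_assoc]
    _ = ∑ j ∈ ra.index, ∑ i ∈ rb.index, ∑ m ∈ (r2 i).index,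
          Phi f (ra.left j) (ra.right j)
            (rb.left i ⊗ₜ[k] ((r2 i).left m ⊗ₜ[k] (r2 i).right m)) := by
        refine Finset.sum_congr rfl fun j _ => ?_
        simp only [Phi_apply]
        have hterm : ∀ i ∈ rb.index,
            ∑ m ∈ (r2 i).index,
              f (ra.right j * ((r2 i).left m * HopfAlgebra.antipode (R := k) ((r2 i).right m)))
                • (ra.left j * rb.left i)
            = (Coalgebra.counit (R := k) (rb.right i)) •
                (f (ra.right j) • (ra.left j * rb.left i)) := by
          intro i _
          rw [smul_smul, ← Finset.sum_smul]
          congr 1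
          rw [← map_sum, ← Finset.mul_sum, HopfAlgebra.sum_mul_antipode_eq_smul (r2 i),
            mul_smul_comm, mul_one, map_smul, smul_eq_mul]
        rw [Finset.sum_congr rfl hterm]
        conv_lhs => rw [← counit_smul_sum rb]
        rw [Finset.mul_sum, Finset.smul_sum]
        refine Finset.sum_congr rfl fun i _ => ?_
        rw [mul_smul_comm, smul_comm]
    _ = ∑ i ∈ rb.index, ∑ j ∈ ra.index, ∑ m ∈ (r2 i).index,
          Phi f (ra.left j) (ra.right j)
            (rb.left i ⊗ₜ[k] ((r2 i).left m ⊗ₜ[k] (r2 i).right m)) := Finset.sum_comm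
    _ = ∑ i ∈ rb.index, ∑ j ∈ ra.index, ∑ m ∈ (r1 i).index,
          Phi f (ra.left j) (ra.right j)
            ((r1 i).left m ⊗ₜ[k] ((r1 i).right m ⊗ₜ[k] rb.right i)) := by
        rw [Finset.sum_comm]
        conv_rhs => rw [Finset.sum_comm]
        exact (Finset.sum_congr rfl fun j _ => (hPhi j).symm)
    _ = ∑ i ∈ rb.index,
        sk (f ∘ₗ LinearMap.mulRight k (HopfAlgebra.antipode (R := k) (rb.right i)))
          (a * rb.left i) := by
        exact (Finset.sum_congr rfl fun i _ => (hsk i).symm)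


variable (B : Module.Basis P k H)

lemma comul_basis_eq (ν : P) :
    Coalgebra.comul (R := k) (B ν)
      = ∑ p ∈ ((B.tensorProduct B).repr (Coalgebra.comul (R := k) (B ν))).support,
          cC B ν p.1 p.2 • (B p.1 ⊗ₜ[k] B p.2) := by
  conv_lhs => rw [basis_expand (B.tensorProduct B) (Coalgebra.comul (R := k) (B ν))]
  refine Finset.sum_congr rfl fun p _ => ?_
  rw [Module.Basis.tensorProduct_apply']
  rfl

lemma sk_basis (g : H →ₗ[k] k) (ν : P) :
    sk g (B ν)
      = ∑ p ∈ ((B.tensorProduct B).repr (Coalgebra.comul (R := k) (B ν))).support,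
          (cC B ν p.1 p.2 * g (B p.2)) • B p.1 := by
  conv_lhs => rw [sk_apply, comul_basis_eq]
  simp only [map_sum, map_smul, LinearMap.lTensor_tmul, TensorProduct.rid_tmul, smul_smul]

lemma skewL_eq_sum (ν y : P) (s : Finset P) (hs : ∀ x, cC B ν x y ≠ 0 → x ∈ s) :
    skewL B ν y = ∑ x ∈ s, cC B ν x y • B x := by
  refine finsum_eq_sum_of_support_subset _ fun x hx => hs x fun h0 => ?_
  exact (Function.mem_support.mp hx) (by rw [h0, zero_smul])

lemma skewL_eq_filter [DecidableEq P] (ν y : P) :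
    skewL B ν y
      = ∑ p ∈ ((B.tensorProduct B).repr (Coalgebra.comul (R := k) (B ν))).support,
          (if p.2 = y then cC B ν p.1 p.2 else 0) • B p.1 := by
  classical
  set s := ((B.tensorProduct B).repr (Coalgebra.comul (R := k) (B ν))).support with hs
  have hmem : ∀ x, cC B ν x y ≠ 0 → x ∈ (s.filter (fun p => p.2 = y)).image Prod.fst := by
    intro x hx
    exact Finset.mem_image.mpr ⟨(x, y),
      Finset.mem_filter.mpr ⟨Finsupp.mem_support_iff.mpr hx, rfl⟩, rfl⟩
  rw [skewL_eq_sum B ν y _ hmem]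
  rw [Finset.sum_image (fun p hp q hq h => ?inj)]
  case inj =>
    have h1 := (Finset.mem_filter.mp hp).2
    have h2 := (Finset.mem_filter.mp hq).2
    exact Prod.ext h (h1.trans h2.symm)
  rw [Finset.sum_filter]
  refine Finset.sum_congr rfl fun p _ => ?_
  split_ifs with h
  · rw [h]
  · rw [zero_smul]

lemma sk_coord (y ν : P) : sk (B.coord y) (B ν) = skewL B ν y := by
  classical
  rw [sk_basis, skewL_eq_filter]
  refine Finset.sum_congr rfl fun p _ => ?_
  congr 1
  rw [Module.Basis.coord_apply, Module.Basis.repr_self, Finsupp.single_apply]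
  split_ifs with h
  · rw [mul_one]
  · rw [mul_zero]

lemma L1 (lam t ν : P) (hfin : {x : P | bC B lam x t ≠ 0}.Finite) :
    sk (B.coord lam ∘ₗ LinearMap.mulRight k (B t)) (B ν)
      = ∑ y ∈ hfin.toFinset, bC B lam y t • skewL B ν y := by
  classical
  rw [sk_basis]
  have h1 : ∀ y, bC B lam y t • skewL B ν y
      = ∑ p ∈ ((B.tensorProduct B).repr (Coalgebra.comul (R := k) (B ν))).support,
          (if p.2 = y then bC B lam y t * cC B ν p.1 p.2 else 0) • B p.1 := by
    intro y
    rw [skewL_eq_filter, Finset.smul_sum]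
    refine Finset.sum_congr rfl fun p _ => ?_
    rw [smul_smul, mul_ite, mul_zero]
  rw [Finset.sum_congr rfl fun y _ => h1 y, Finset.sum_comm]
  refine Finset.sum_congr rfl fun p _ => ?_
  rw [← Finset.sum_smul]
  congr 1
  rw [Finset.sum_ite_eq hfin.toFinset p.2 (fun y => bC B lam y t * cC B ν p.1 p.2)]
  have hval : (B.coord lam ∘ₗ LinearMap.mulRight k (B t)) (B p.2) = bC B lam p.2 t := rfl
  rw [hval]
  split_ifs with h
  · ring
  · have h0 : bC B lam p.2 t = 0 := by
      by_contra h0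
      exact h (hfin.mem_toFinset.mpr h0)
    rw [h0, mul_zero]


/-- The atomic term of the quadruple sum. -/
noncomputable def Fterm (e : P → ℕ) (T : P → P) (lam μ σ τ : P)
    (κ π ρ lm mp : P) : H :=
  (cC B τ κ σ * cC B κ π ρ * ((-1 : k) ^ e ρ) * bC B lam lm (T ρ) * bC B mp μ π)
    • skewL B mp lm

end SkewLR

open SkewLR in
/-- **Algebraic Littlewood–Richardson formula.**  If the antipode acts on the
basis by `S(L_ρ) = (−1)^{e(ρ)} • L_{T(ρ)}`, and for each `ν, μ` the set
`{λ : b^ν_{λ,μ} ≠ 0}` is finite, then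
`L_{μ/λ} · L_{τ/σ}
  = Σ_{π,ρ,λ⁻,μ⁺} (−1)^{e(ρ)} · c^τ_{π,ρ,σ} · b^λ_{λ⁻,T(ρ)} · b^{μ⁺}_{μ,π}
      • L_{μ⁺/λ⁻}`,
a finitely supported sum over quadruples `(π, ρ, λ⁻, μ⁺)`. -/
theorem skewL_mul_skewL (B : Module.Basis P k H) (e : P → ℕ) (T : P → P)
    (hS : ∀ ρ : P,
      HopfAlgebra.antipode (R := k) (B ρ) = ((-1 : k) ^ e ρ) • B (T ρ))
    (hb : ∀ ν μ : P, {lam : P | bC B ν lam μ ≠ 0}.Finite)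
    (lam μ σ τ : P) :
    skewL B μ lam * skewL B τ σ =
      ∑ᶠ q : P × P × P × P,
        (((-1 : k) ^ e q.2.1) * cC3 B τ q.1 q.2.1 σ
            * bC B lam q.2.2.1 (T q.2.1) * bC B q.2.2.2 μ q.1)
          • skewL B q.2.2.2 q.2.2.1 := by
  classical
  set S1 : Finset P :=
    ((B.tensorProduct B).repr (Coalgebra.comul (R := k) (B τ))).support.image Prod.fst with hS1
  set sPR : Finset (P × P) :=
    S1.biUnion (fun κ => ((B.tensorProduct B).repr (Coalgebra.comul (R := k) (B κ))).support)
    with hsPR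
  set sp : Finset P := sPR.image Prod.fst with hsp
  set sr : Finset P := sPR.image Prod.snd with hsr
  set sl : Finset P := sr.biUnion (fun ρ => (hb lam (T ρ)).toFinset) with hsl
  set sm : Finset P := sp.biUnion (fun π => (B.repr (B μ * B π)).support) with hsm
  -- the explicit Sweedler representation of `comul (skewL B τ σ)`
  have hrbeq :
      ∑ i ∈ S1 ×ˢ sPR, ((cC B τ i.1 σ * cC B i.1 i.2.1 i.2.2) • B i.2.1) ⊗ₜ[k] B i.2.2
        = Coalgebra.comul (R := k) (skewL B τ σ) := by
    rw [skewL_eq_sum B τ σ S1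
      (fun x h => Finset.mem_image.mpr ⟨(x, σ), Finsupp.mem_support_iff.mpr h, rfl⟩)]
    rw [map_sum, Finset.sum_product]
    refine Finset.sum_congr rfl fun κ hκ => ?_
    have hsub : ((B.tensorProduct B).repr (Coalgebra.comul (R := k) (B κ))).support ⊆ sPR :=
      fun p hp => Finset.mem_biUnion.mpr ⟨κ, hκ, hp⟩
    rw [map_smul]
    calc ∑ p ∈ sPR, ((cC B τ κ σ * cC B κ p.1 p.2) • B p.1) ⊗ₜ[k] B p.2
        = ∑ p ∈ ((B.tensorProduct B).repr (Coalgebra.comul (R := k) (B κ))).support,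
            ((cC B τ κ σ * cC B κ p.1 p.2) • B p.1) ⊗ₜ[k] B p.2 := by
          refine (Finset.sum_subset hsub fun p _ hp => ?_).symm
          have h0 : cC B κ p.1 p.2 = 0 := Finsupp.notMem_support_iff.mp hp
          rw [h0, mul_zero, zero_smul, TensorProduct.zero_tmul]
      _ = cC B τ κ σ • Coalgebra.comul (R := k) (B κ) := by
          conv_rhs => rw [comul_basis_eq B κ]
          rw [Finset.smul_sum]
          refine Finset.sum_congr rfl fun p _ => ?_
          rw [mul_smul]
          exact (TensorProduct.smul_tmul' _ _ _).symm
  have step1 : skewL B μ lam * skewL B τ σ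
      = ∑ i ∈ S1 ×ˢ sPR,
          sk (B.coord lam ∘ₗ LinearMap.mulRight k (HopfAlgebra.antipode (R := k) (B i.2.2)))
            (B μ * ((cC B τ i.1 σ * cC B i.1 i.2.1 i.2.2) • B i.2.1)) := by
    rw [← sk_coord B lam μ]
    exact key (B.coord lam) (B μ) (skewL B τ σ)
      ⟨S1 ×ˢ sPR, fun i => (cC B τ i.1 σ * cC B i.1 i.2.1 i.2.2) • B i.2.1,
        fun i => B i.2.2, hrbeq⟩
  have step2 : ∀ i ∈ S1 ×ˢ sPR,
      sk (B.coord lam ∘ₗ LinearMap.mulRight k (HopfAlgebra.antipode (R := k) (B i.2.2)))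
        (B μ * ((cC B τ i.1 σ * cC B i.1 i.2.1 i.2.2) • B i.2.1))
      = ∑ mp ∈ sm, ∑ lm ∈ sl, Fterm B e T lam μ σ τ i.1 i.2.1 i.2.2 lm mp := by
    rintro ⟨κ, π, ρ⟩ hi
    obtain ⟨hκ, hpr⟩ := Finset.mem_product.mp hi
    have hπ : π ∈ sp := Finset.mem_image.mpr ⟨(π, ρ), hpr, rfl⟩
    have hρ : ρ ∈ sr := Finset.mem_image.mpr ⟨(π, ρ), hpr, rfl⟩
    have hL1 := fun mp => L1 B lam (T ρ) mp (hb lam (T ρ))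
    calc sk (B.coord lam ∘ₗ LinearMap.mulRight k (HopfAlgebra.antipode (R := k) (B ρ)))
          (B μ * ((cC B τ κ σ * cC B κ π ρ) • B π))
        = ((-1 : k) ^ e ρ) • ((cC B τ κ σ * cC B κ π ρ) •
            sk (B.coord lam ∘ₗ LinearMap.mulRight k (B (T ρ))) (B μ * B π)) := by
          rw [hS ρ, mulRight_smul', comp_smul', sk_smul, mul_smul_comm, map_smul]
      _ = ((-1 : k) ^ e ρ) • ((cC B τ κ σ * cC B κ π ρ) •
            ∑ mp ∈ (B.repr (B μ * B π)).support, bC B mp μ π •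
              ∑ lm ∈ (hb lam (T ρ)).toFinset, bC B lam lm (T ρ) • skewL B mp lm) := by
          conv_lhs => rw [basis_expand B (B μ * B π)]
          rw [map_sum]
          simp only [map_smul, hL1]
          rfl
      _ = ∑ mp ∈ (B.repr (B μ * B π)).support, ∑ lm ∈ (hb lam (T ρ)).toFinset,
            Fterm B e T lam μ σ τ κ π ρ lm mp := by
          rw [Finset.smul_sum, Finset.smul_sum]
          refine Finset.sum_congr rfl fun mp _ => ?_
          rw [Finset.smul_sum, Finset.smul_sum, Finset.smul_sum]
          refine Finset.sum_congr rfl fun lm _ => ?_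
          simp only [Fterm, smul_smul]
          congr 1
          ring
      _ = ∑ mp ∈ (B.repr (B μ * B π)).support, ∑ lm ∈ sl,
            Fterm B e T lam μ σ τ κ π ρ lm mp := by
          refine Finset.sum_congr rfl fun mp _ => ?_
          refine Finset.sum_subset (fun lm hlm => Finset.mem_biUnion.mpr ⟨ρ, hρ, hlm⟩)
            fun lm _ hlm => ?_
          have h0 : bC B lam lm (T ρ) = 0 := by
            by_contra h0
            exact hlm ((hb lam (T ρ)).mem_toFinset.mpr h0)
          simp [Fterm, h0]
      _ = ∑ mp ∈ sm, ∑ lm ∈ sl, Fterm B e T lam μ σ τ κ π ρ lm mp := by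
          refine Finset.sum_subset (fun mp hmp => Finset.mem_biUnion.mpr ⟨π, hπ, hmp⟩)
            fun mp _ hmp => ?_
          have h0 : bC B mp μ π = 0 := Finsupp.notMem_support_iff.mp hmp
          simp [Fterm, h0]
  have hcC3 : ∀ π ρ : P, cC3 B τ π ρ σ = ∑ κ ∈ S1, cC B τ κ σ * cC B κ π ρ := by
    intro π ρ
    refine finsum_eq_sum_of_support_subset _ fun κ hκ => ?_
    have h1 : cC B τ κ σ ≠ 0 := fun h0 => (Function.mem_support.mp hκ) (by rw [h0, zero_mul])
    exact Finset.mem_image.mpr ⟨(κ, σ), Finsupp.mem_support_iff.mpr h1, rfl⟩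
  have hgq : ∀ q : P × P × P × P,
      (((-1 : k) ^ e q.2.1) * cC3 B τ q.1 q.2.1 σ
          * bC B lam q.2.2.1 (T q.2.1) * bC B q.2.2.2 μ q.1) • skewL B q.2.2.2 q.2.2.1
      = ∑ κ ∈ S1, Fterm B e T lam μ σ τ κ q.1 q.2.1 q.2.2.1 q.2.2.2 := by
    intro q
    rw [hcC3, Finset.mul_sum, Finset.sum_mul, Finset.sum_mul, Finset.sum_smul]
    refine Finset.sum_congr rfl fun κ _ => ?_
    simp only [Fterm]
    congr 1
    ring
  have hsupp : Function.support
      (fun q : P × P × P × P =>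
        (((-1 : k) ^ e q.2.1) * cC3 B τ q.1 q.2.1 σ
            * bC B lam q.2.2.1 (T q.2.1) * bC B q.2.2.2 μ q.1) • skewL B q.2.2.2 q.2.2.1)
      ⊆ ((sp ×ˢ sr ×ˢ sl ×ˢ sm : Finset (P × P × P × P)) : Set (P × P × P × P)) := by
    intro q hq
    have hne : (((-1 : k) ^ e q.2.1) * cC3 B τ q.1 q.2.1 σ
        * bC B lam q.2.2.1 (T q.2.1) * bC B q.2.2.2 μ q.1) ≠ 0 := by
      intro h0
      exact (Function.mem_support.mp hq) (by rw [h0, zero_smul])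
    rw [mul_ne_zero_iff, mul_ne_zero_iff, mul_ne_zero_iff] at hne
    obtain ⟨⟨⟨-, h2⟩, h3⟩, h4⟩ := hne
    have hex : ∃ κ, cC B τ κ σ * cC B κ q.1 q.2.1 ≠ 0 := by
      by_contra hno
      push_neg at hno
      exact h2 (by rw [cC3, finsum_congr hno, finsum_zero])
    obtain ⟨κ, hκ⟩ := hex
    rw [mul_ne_zero_iff] at hκ
    obtain ⟨hκ1, hκ2⟩ := hκ
    have hκS1 : κ ∈ S1 :=
      Finset.mem_image.mpr ⟨(κ, σ), Finsupp.mem_support_iff.mpr hκ1, rfl⟩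
    have hprPR : (q.1, q.2.1) ∈ sPR :=
      Finset.mem_biUnion.mpr ⟨κ, hκS1, Finsupp.mem_support_iff.mpr hκ2⟩
    have hq1 : q.1 ∈ sp := Finset.mem_image.mpr ⟨(q.1, q.2.1), hprPR, rfl⟩
    have hq2 : q.2.1 ∈ sr := Finset.mem_image.mpr ⟨(q.1, q.2.1), hprPR, rfl⟩
    have hq3 : q.2.2.1 ∈ sl :=
      Finset.mem_biUnion.mpr ⟨q.2.1, hq2, (hb lam (T q.2.1)).mem_toFinset.mpr h3⟩
    have hq4 : q.2.2.2 ∈ sm :=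
      Finset.mem_biUnion.mpr ⟨q.1, hq1, Finsupp.mem_support_iff.mpr h4⟩
    
    exact Finset.mem_coe.mpr (Finset.mem_product.mpr ⟨hq1,
      Finset.mem_product.mpr ⟨hq2, Finset.mem_product.mpr ⟨hq3, hq4⟩⟩⟩)
  calc skewL B μ lam * skewL B τ σ
      = ∑ i ∈ S1 ×ˢ sPR, ∑ mp ∈ sm, ∑ lm ∈ sl,
          Fterm B e T lam μ σ τ i.1 i.2.1 i.2.2 lm mp := by
        rw [step1]; exact Finset.sum_congr rfl step2
    _ = ∑ κ ∈ S1, ∑ p ∈ sPR, ∑ mp ∈ sm, ∑ lm ∈ sl,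
          Fterm B e T lam μ σ τ κ p.1 p.2 lm mp := by
        rw [Finset.sum_product]
    _ = ∑ κ ∈ S1, ∑ p ∈ sp ×ˢ sr, ∑ mp ∈ sm, ∑ lm ∈ sl,
          Fterm B e T lam μ σ τ κ p.1 p.2 lm mp := by
        refine Finset.sum_congr rfl fun κ hκ => ?_
        refine Finset.sum_subset (fun p hp => Finset.mem_product.mpr
          ⟨Finset.mem_image.mpr ⟨p, hp, rfl⟩, Finset.mem_image.mpr ⟨p, hp, rfl⟩⟩)
          fun p _ hp => ?_
        have h0 : cC B κ p.1 p.2 = 0 := by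
          refine Finsupp.notMem_support_iff.mp fun hmem => hp ?_
          exact Finset.mem_biUnion.mpr ⟨κ, hκ, hmem⟩
        simp [Fterm, h0]
    _ = ∑ κ ∈ S1, ∑ π ∈ sp, ∑ ρ ∈ sr, ∑ mp ∈ sm, ∑ lm ∈ sl,
          Fterm B e T lam μ σ τ κ π ρ lm mp := by
        refine Finset.sum_congr rfl fun κ _ => ?_
        rw [Finset.sum_product]
    _ = ∑ κ ∈ S1, ∑ π ∈ sp, ∑ ρ ∈ sr, ∑ lm ∈ sl, ∑ mp ∈ sm,
          Fterm B e T lam μ σ τ κ π ρ lm mp := by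
        exact Finset.sum_congr rfl fun κ _ => Finset.sum_congr rfl fun π _ =>
          Finset.sum_congr rfl fun ρ _ => Finset.sum_comm
    _ = ∑ π ∈ sp, ∑ ρ ∈ sr, ∑ lm ∈ sl, ∑ mp ∈ sm, ∑ κ ∈ S1,
          Fterm B e T lam μ σ τ κ π ρ lm mp := by
        rw [Finset.sum_comm]
        refine Finset.sum_congr rfl fun π _ => ?_
        rw [Finset.sum_comm]
        refine Finset.sum_congr rfl fun ρ _ => ?_
        rw [Finset.sum_comm]
        refine Finset.sum_congr rfl fun lm _ => ?_
        exact Finset.sum_comm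
    _ = ∑ q ∈ sp ×ˢ sr ×ˢ sl ×ˢ sm, ∑ κ ∈ S1,
          Fterm B e T lam μ σ τ κ q.1 q.2.1 q.2.2.1 q.2.2.2 := by
        simp only [Finset.sum_product]
    _ = ∑ q ∈ sp ×ˢ sr ×ˢ sl ×ˢ sm,
          (((-1 : k) ^ e q.2.1) * cC3 B τ q.1 q.2.1 σ
              * bC B lam q.2.2.1 (T q.2.1) * bC B q.2.2.2 μ q.1)
            • skewL B q.2.2.2 q.2.2.1 :=
        Finset.sum_congr rfl fun q _ => (hgq q).symm
    _ = ∑ᶠ q : P × P × P × P,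
          (((-1 : k) ^ e q.2.1) * cC3 B τ q.1 q.2.1 σ
              * bC B lam q.2.2.1 (T q.2.1) * bC B q.2.2.2 μ q.1)
            • skewL B q.2.2.2 q.2.2.1 :=
        (finsum_eq_sum_of_support_subset _ hsupp).symm
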